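/- Let n, k be positive integers with k ≤ n, let Σ be a compact smooth k-dimensional submanifold (possibly with boundary) of ℝⁿ, and let t > 0. Then the t-neighborhood N_t(Σ) of Σ is contained in the union of the exponential t-tube V_t(Σ) and the t-neighborhood N_t(∂Σ) of its boundary. -/

import Mathlib

open scoped Manifold RealInnerProductSpace
open Metric Set
open scoped Topology

/-- For a compact smooth `k`-dimensional submanifold `Σ ⊆ ℝⁿ` (possibly with boundary),
parametrized by a smooth embedding `F` of a compact `k`-manifold with boundary `M`, the
`t`-neighborhood of `Σ` is contained in the union of the exponential `t`-tube
`V_t(Σ) = {F x + v : v ⟂ T_{F x}Σ, ‖v‖ < t}` and the `t`-neighborhood of `∂Σ`. -/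
theorem thickening_subset_tube_union_boundary {n k : ℕ} [NeZero k] (hkn : k ≤ n)
    {M : Type*} [TopologicalSpace M] [ChartedSpace (EuclideanHalfSpace k) M]
    [IsManifold (𝓡∂ k) (⊤ : ℕ∞) M] [CompactSpace M]
    (F : M → EuclideanSpace ℝ (Fin n))
    (hF : ContMDiff (𝓡∂ k) 𝓘(ℝ, EuclideanSpace ℝ (Fin n)) (⊤ : ℕ∞) F)
    (hF_emb : Topology.IsEmbedding F)
    (hF_imm : ∀ x, Function.Injective
      (mfderiv (𝓡∂ k) 𝓘(ℝ, EuclideanSpace ℝ (Fin n)) F x))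
    (t : ℝ) (ht : 0 < t) :
    thickening t (range F) ⊆
      { p | ∃ (x : M) (v : EuclideanSpace ℝ (Fin n)), ‖v‖ < t ∧
          (∀ u ∈ range (mfderiv (𝓡∂ k) 𝓘(ℝ, EuclideanSpace ℝ (Fin n)) F x), ⟪v, u⟫ = 0) ∧
          p = F x + v } ∪
        thickening t (F '' ((𝓡∂ k).boundary M)) := by
  intro p hp
  rcases isEmpty_or_nonempty M with hM | hM
  · rw [range_eq_empty F, thickening_empty] at hp
    exact absurd hp (notMem_empty p)
  have hne : (range F).Nonempty := range_nonempty F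
  have hcomp : IsCompact (range F) := isCompact_range hF_emb.continuous
  obtain ⟨q, hqmem, hq⟩ := hcomp.exists_infDist_eq_dist hne p
  obtain ⟨x, rfl⟩ := hqmem
  have hdist : dist p (F x) < t := by
    rw [← hq]
    exact (mem_thickening_iff_infDist_lt hne).1 hp
  rcases (𝓡∂ k).isInteriorPoint_or_isBoundaryPoint x with hint | hbd
  · -- interior point: orthogonality by first variation
    left
    refine ⟨x, p - F x, ?_, ?_, by abel⟩
    · rwa [← dist_eq_norm]
    · have hkey : ∀ u', ⟪p - F x, mfderiv (𝓡∂ k) 𝓘(ℝ, EuclideanSpace ℝ (Fin n)) F x u'⟫ = 0 := by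
        intro u'
        set e := extChartAt (𝓡∂ k) x with he
        set c := e x with hc
        have hmd : MDifferentiableAt (𝓡∂ k) 𝓘(ℝ, EuclideanSpace ℝ (Fin n)) F x :=
          hF.mdifferentiableAt (by simp)
        have hmem : range (𝓡∂ k) ∈ 𝓝 c := range_mem_nhds_isInteriorPoint hint
        set w : EuclideanSpace ℝ (Fin k) → EuclideanSpace ℝ (Fin n) :=
          writtenInExtChartAt (𝓡∂ k) 𝓘(ℝ, EuclideanSpace ℝ (Fin n)) x F with hwdef
        have hw : ∀ z, w z = F (e.symm z) := by
          intro z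
          simp [hwdef, writtenInExtChartAt, extChartAt_model_space_eq_id, he, chartAt_self_eq]
        have hda : DifferentiableAt ℝ w c :=
          (hmd.differentiableWithinAt_writtenInExtChartAt).differentiableAt hmem
        set D := fderiv ℝ w c with hD
        have hDeq : mfderiv (𝓡∂ k) 𝓘(ℝ, EuclideanSpace ℝ (Fin n)) F x = D := by
          rw [hmd.mfderiv, fderivWithin_of_mem_nhds hmem]
        have hwc : w c = F x := by
          rw [hw, hc, e.left_inv (mem_extChartAt_source x)]
        -- the squared distance has a global min at c
        set g : EuclideanSpace ℝ (Fin k) → ℝ := fun z => ⟪p - w z, p - w z⟫ with hg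
        have hmin : IsLocalMin g c := by
          apply Filter.Eventually.of_forall
          intro z
          have h1 : dist p (F x) ≤ dist p (F (e.symm z)) := by
            rw [← hq]
            exact infDist_le_dist_of_mem (mem_range_self _)
          have hgc : g c = ‖p - F x‖ ^ 2 := by
            show ⟪p - w c, p - w c⟫ = _
            rw [hwc, real_inner_self_eq_norm_sq]
          have hgz : g z = ‖p - F (e.symm z)‖ ^ 2 := by
            show ⟪p - w z, p - w z⟫ = _
            rw [hw, real_inner_self_eq_norm_sq]
          rw [dist_eq_norm, dist_eq_norm] at h1
          rw [hgc, hgz]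
          exact pow_le_pow_left₀ (norm_nonneg _) h1 2
        have hsub : HasFDerivAt (fun z => p - w z) (-D) c := by
          have h := (hasFDerivAt_const p c).sub hda.hasFDerivAt
          rw [zero_sub] at h
          exact h
        have hder : HasFDerivAt g
            ((fderivInnerCLM ℝ (p - w c, p - w c)).comp ((-D).prod (-D))) c :=
          hsub.inner ℝ hsub
        have hzero := hmin.hasFDerivAt_eq_zero hder
        have h0 : fderivInnerCLM ℝ (p - F x, p - F x) ((-D) u', (-D) u') = 0 := by
          have h1 := DFunLike.congr_fun hzero u'
          rw [← hwc]
          exact h1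
        rw [fderivInnerCLM_apply] at h0
        simp only [ContinuousLinearMap.neg_apply, inner_neg_left, inner_neg_right] at h0
        have h2 : ⟪p - F x, D u'⟫ = 0 := by
          have hsymm : ⟪p - F x, D u'⟫ = ⟪D u', p - F x⟫ := real_inner_comm _ _
          have h3 : (-D) u' = -(D u') := rfl
          rw [h3, inner_neg_left, inner_neg_right] at h0
          linarith
        rw [hDeq]
        exact h2
      rintro u ⟨u', rfl⟩
      exact hkey u'
  · -- boundary point
    right
    exact mem_thickening_iff.2 ⟨F x, mem_image_of_mem F hbd, hdist⟩
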